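/- Let τ₁,…,τ_M be density matrices with priors p₁,…,p_M and minimum average error probability ε over all POVMs. Then for every density matrix μ₀ and every t ≥ 0, ε ≥ Σᵢ pᵢ tr(τᵢ · {pᵢτᵢ − tμ₀ ≤ 0}) − t. -/

import Mathlib

open Matrix
open scoped ComplexOrder

/-- Spectral projection of a Hermitian matrix onto the eigenspaces whose
eigenvalue satisfies the predicate `pred`. -/
noncomputable def specProj {ι : Type*} [Fintype ι] [DecidableEq ι]
    {A : Matrix ι ι ℂ} (hA : A.IsHermitian) (pred : ℝ → Prop) : Matrix ι ι ℂ :=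
  letI := Classical.decPred pred
  (hA.eigenvectorUnitary : Matrix ι ι ℂ) *
    Matrix.diagonal (fun i => if pred (hA.eigenvalues i) then (1 : ℂ) else 0) *
    star (hA.eigenvectorUnitary : Matrix ι ι ℂ)

/-- diagonal entries of a psd matrix have nonneg real part -/
lemma psd_diag_re_nonneg {m : Type*} [Fintype m] [DecidableEq m]
    {B : Matrix m m ℂ} (hB : B.PosSemidef) (i : m) : 0 ≤ (B i i).re := by
  have h := hB.dotProduct_mulVec_nonneg (Pi.single i 1)
  simp [dotProduct, mulVec, Pi.single_apply] at h
  exact (Complex.le_def.mp h).1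

lemma trace_diag_mul {m : Type*} [Fintype m] [DecidableEq m] (d : m → ℂ)
    (B : Matrix m m ℂ) : trace (Matrix.diagonal d * B) = ∑ i, d i * B i i := by
  simp [Matrix.trace, Matrix.diag, Matrix.diagonal_mul]

/-- Key lemma: among all `0 ≤ Q ≤ 1`, the projection onto the nonpositive
eigenspaces minimizes `Re tr(A Q)`. -/
lemma specProj_trace_mul_le {m : Type*} [Fintype m] [DecidableEq m]
    {A Q : Matrix m m ℂ} (hA : A.IsHermitian)
    (hQ : Q.PosSemidef) (hQ1 : (1 - Q).PosSemidef) :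
    (trace (A * specProj hA (fun x => x ≤ 0))).re ≤ (trace (A * Q)).re := by
  classical
  set U := (hA.eigenvectorUnitary : Matrix m m ℂ) with hUdef
  have hU1 : star U * U = 1 := Matrix.mem_unitaryGroup_iff'.mp hA.eigenvectorUnitary.2
  have hU2 : U * star U = 1 := Matrix.mem_unitaryGroup_iff.mp hA.eigenvectorUnitary.2
  set D : Matrix m m ℂ := Matrix.diagonal (RCLike.ofReal ∘ hA.eigenvalues) with hD
  letI := Classical.decPred (fun x : ℝ => x ≤ 0)
  set D' : Matrix m m ℂ :=
    Matrix.diagonal (fun i => if hA.eigenvalues i ≤ 0 then (1 : ℂ) else 0) with hD'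
  set B : Matrix m m ℂ := star U * Q * U with hBdef
  have hBpsd : B.PosSemidef := by
    exact hQ.conjTranspose_mul_mul_same U
  have hB1psd : (1 - B).PosSemidef := by
    have : star U * (1 - Q) * U = 1 - B := by
      rw [mul_sub, mul_one, sub_mul, hU1]
    rw [← this]
    simpa [Matrix.star_eq_conjTranspose] using hQ1.conjTranspose_mul_mul_same U
  -- LHS computation
  have hLHS : trace (A * specProj hA (fun x => x ≤ 0)) =
      ∑ i, (hA.eigenvalues i : ℂ) * (if hA.eigenvalues i ≤ 0 then (1 : ℂ) else 0) := by
    have h1 : A * specProj hA (fun x => x ≤ 0) = U * ((D * D') * star U) := by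
      show A * (U * D' * star U) = _
      conv_lhs => rw [hA.spectral_theorem]
      simp only [Unitary.conjStarAlgAut_apply, Matrix.mul_assoc, ← hUdef, ← hD]
      rw [show star U * (U * (D' * star U)) = D' * star U by
        rw [← Matrix.mul_assoc, hU1, one_mul]]
    rw [h1, Matrix.trace_mul_comm, Matrix.mul_assoc, hU1, mul_one, hD, hD',
      Matrix.diagonal_mul_diagonal, Matrix.trace_diagonal]
    simp
  -- RHS computation
  have hRHS : trace (A * Q) = ∑ i, (hA.eigenvalues i : ℂ) * B i i := by
    conv_lhs => rw [hA.spectral_theorem, Unitary.conjStarAlgAut_apply]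
    rw [show (U * D * star U) * Q = U * (D * (star U * Q)) by
      simp only [Matrix.mul_assoc]]
    rw [Matrix.trace_mul_comm, Matrix.mul_assoc, Matrix.mul_assoc, ← Matrix.mul_assoc (star U) Q U,
      ← hBdef, hD, trace_diag_mul]
    simp
  rw [hLHS, hRHS, Complex.re_sum, Complex.re_sum]
  apply Finset.sum_le_sum
  intro i _
  have h0 : 0 ≤ (B i i).re := psd_diag_re_nonneg hBpsd i
  have h1 : (B i i).re ≤ 1 := by
    have := psd_diag_re_nonneg hB1psd i
    simp [Matrix.sub_apply, Matrix.one_apply] at this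
    linarith
  by_cases hev : hA.eigenvalues i ≤ 0
  · simp only [hev, if_pos, if_true, mul_one]
    rw [Complex.re_ofReal_mul, Complex.ofReal_re]
    nlinarith
  · have hlt : (0:ℝ) < hA.eigenvalues i := lt_of_not_ge hev
    rw [if_neg hev, mul_zero, Complex.zero_re, Complex.re_ofReal_mul]
    nlinarith
  
/-- Under a spectral projection, the trace of a psd matrix can only shrink. -/
lemma trace_psd_specProj_le {m : Type*} [Fintype m] [DecidableEq m]
    {A μ : Matrix m m ℂ} (hA : A.IsHermitian) (hμ : μ.PosSemidef) :
    (trace (μ * specProj hA (fun x => x ≤ 0))).re ≤ (trace μ).re := by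
  classical
  set U := (hA.eigenvectorUnitary : Matrix m m ℂ) with hUdef
  have hU1 : star U * U = 1 := Matrix.mem_unitaryGroup_iff'.mp hA.eigenvectorUnitary.2
  have hU2 : U * star U = 1 := Matrix.mem_unitaryGroup_iff.mp hA.eigenvectorUnitary.2
  letI := Classical.decPred (fun x : ℝ => x ≤ 0)
  set D' : Matrix m m ℂ :=
    Matrix.diagonal (fun i => if hA.eigenvalues i ≤ 0 then (1 : ℂ) else 0) with hD'
  set C : Matrix m m ℂ := star U * μ * U with hCdef
  have hCpsd : C.PosSemidef := by
    exact hμ.conjTranspose_mul_mul_same U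
  have htrC : trace C = trace μ := by
    rw [hCdef, Matrix.trace_mul_cycle, hU2, one_mul]
  have h1 : trace (μ * specProj hA (fun x => x ≤ 0)) =
      ∑ i, (if hA.eigenvalues i ≤ 0 then (1 : ℂ) else 0) * C i i := by
    show trace (μ * (U * D' * star U)) = _
    rw [show μ * (U * D' * star U) = (μ * U) * (D' * star U) by
      simp only [Matrix.mul_assoc]]
    rw [Matrix.trace_mul_comm, Matrix.mul_assoc, ← Matrix.mul_assoc (star U) μ U, ← hCdef,
      hD', trace_diag_mul]
  rw [h1, ← htrC, Complex.re_sum]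
  have : trace C = ∑ i, C i i := by simp [Matrix.trace, Matrix.diag]
  rw [this, Complex.re_sum]
  apply Finset.sum_le_sum
  intro i _
  have h0 : 0 ≤ (C i i).re := psd_diag_re_nonneg hCpsd i
  by_cases hev : hA.eigenvalues i ≤ 0
  · simp [hev]
  · simp [hev, h0]

/-- lower-bound direction of Theorem 2: for every POVM, every
density matrix `μ₀` and every `t ≥ 0`,
`1 − Σᵢ pᵢ tr(τᵢ Eᵢ) ≥ Σᵢ pᵢ tr(τᵢ · {pᵢτᵢ − tμ₀ ≤ 0}) − t`. -/
theorem mary_error_ge_spectrum {n M : ℕ}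
    {τ : Fin M → Matrix (Fin n) (Fin n) ℂ}
    (hτ : ∀ i, (τ i).PosSemidef) (hτt : ∀ i, (τ i).trace = 1)
    {p : Fin M → ℝ} (hp : ∀ i, 0 ≤ p i) (hp1 : ∑ i, p i = 1)
    {μ₀ : Matrix (Fin n) (Fin n) ℂ} (hμ : μ₀.PosSemidef) (hμt : μ₀.trace = 1)
    {t : ℝ} (ht : 0 ≤ t)
    (hH : ∀ i, ((p i : ℂ) • τ i - (t : ℂ) • μ₀).IsHermitian)
    {E : Fin M → Matrix (Fin n) (Fin n) ℂ}
    (hE : ∀ i, (E i).PosSemidef) (hE1 : ∑ i, E i = 1) :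
    1 - ∑ i, p i * (Matrix.trace (τ i * E i)).re ≥
      (∑ i, p i * (Matrix.trace (τ i * specProj (hH i) (fun x => x ≤ 0))).re)
        - t := by
  classical
  -- 1 - E i is psd
  have hsum : ∀ s : Finset (Fin M), (∑ j ∈ s, E j).PosSemidef := by
    intro s
    exact Finset.sum_induction _ _ (fun a b ha hb => ha.add hb)
      Matrix.PosSemidef.zero (fun j _ => hE j)
  have h1E : ∀ i, (1 - E i).PosSemidef := by
    intro i
    have : (1 : Matrix (Fin n) (Fin n) ℂ) - E i = ∑ j ∈ Finset.univ.erase i, E j := by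
      rw [← hE1, ← Finset.add_sum_erase _ E (Finset.mem_univ i)]
      abel
    rw [this]; exact hsum _
  -- expansion of traces of (p i • τ i - t • μ₀) * X
  have hAX : ∀ i (X : Matrix (Fin n) (Fin n) ℂ),
      trace (((p i : ℂ) • τ i - (t : ℂ) • μ₀) * X) =
        (p i : ℂ) * trace (τ i * X) - (t : ℂ) * trace (μ₀ * X) := by
    intro i X
    rw [Matrix.sub_mul, Matrix.smul_mul, Matrix.smul_mul, Matrix.trace_sub,
      Matrix.trace_smul, Matrix.trace_smul]
    simp [smul_eq_mul]
  -- per-index inequality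
  have hkey : ∀ i : Fin M,
      p i * (trace (τ i * specProj (hH i) (fun x => x ≤ 0))).re ≤
        p i - p i * (trace (τ i * E i)).re + t * (trace (μ₀ * E i)).re := by
    intro i
    set P := specProj (hH i) (fun x => x ≤ 0) with hP
    have hQ1 : (1 - (1 - E i)).PosSemidef := by
      rw [sub_sub_cancel]; exact hE i
    have hmain := specProj_trace_mul_le (hH i) (h1E i) hQ1
    have hd : (trace (μ₀ * P)).re ≤ 1 := by
      have := trace_psd_specProj_le (hH i) hμ
      rw [hμt] at this
      simpa using this
    rw [hAX i P, hAX i (1 - E i)] at hmain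
    have hτ1 : trace (τ i * (1 - E i)) = 1 - trace (τ i * E i) := by
      rw [Matrix.mul_sub, mul_one, Matrix.trace_sub, hτt i]
    have hμ1 : trace (μ₀ * (1 - E i)) = 1 - trace (μ₀ * E i) := by
      rw [Matrix.mul_sub, mul_one, Matrix.trace_sub, hμt]
    rw [hτ1, hμ1] at hmain
    simp only [Complex.sub_re, Complex.re_ofReal_mul, Complex.one_re] at hmain
    nlinarith [hmain, hd, ht]
  -- sum up
  have hsumle : ∑ i, p i * (trace (τ i * specProj (hH i) (fun x => x ≤ 0))).re ≤
      ∑ i, (p i - p i * (trace (τ i * E i)).re + t * (trace (μ₀ * E i)).re) :=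
    Finset.sum_le_sum fun i _ => hkey i
  have hc : ∑ i, (trace (μ₀ * E i)).re = 1 := by
    have : ∑ i, trace (μ₀ * E i) = trace μ₀ := by
      rw [← Matrix.trace_sum]
      rw [show ∑ i, μ₀ * E i = μ₀ * ∑ i, E i from (Finset.mul_sum _ _ _).symm, hE1, mul_one]
    rw [← Complex.re_sum, this, hμt]
    simp
  rw [Finset.sum_add_distrib, Finset.sum_sub_distrib, hp1, ← Finset.mul_sum, hc] at hsumle
  linarith
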